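/- Let (Bₙ)ₙ be Borel probability measures on [0,1] converging weakly to a probability measure B∞ (∫ ψ dBₙ → ∫ ψ dB∞ for every continuous ψ on [0,1]), and let (uₙ)ₙ, (vₙ)ₙ be finite nonnegative Borel measures on ℝ≥0 converging weakly to finite nonnegative measures u∞, v∞ respectively (∫ φ duₙ → ∫ φ du∞ and ∫ φ dvₙ → ∫ φ dv∞ for every bounded continuous φ on ℝ≥0). Then for every continuous compactly supported φ : ℝ≥0 → ℝ, ∫ φ d(T_{Bₙ}[uₙ, vₙ]) → ∫ φ d(T_{B∞}[u∞, v∞]) as n → ∞. -/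

import Mathlib

open MeasureTheory Filter Topology

/-- The transfer operator `T_B[u,v]`: the pushforward of `B ⊗ B ⊗ u ⊗ v` under
`(z₁, z₂, x₁, x₂) ↦ x₁ (1 - z₁) + x₂ z₂`. -/
noncomputable def transferT (B u v : Measure ℝ) : Measure ℝ :=
  Measure.map (fun q : (ℝ × ℝ) × ℝ × ℝ => q.2.1 * (1 - q.1.1) + q.2.2 * q.1.2)
    ((B.prod B).prod (u.prod v))

namespace Stmt3Aux

/-- The set of 4-fold products of bounded continuous functions. -/
def D : Set (((ℝ × ℝ) × ℝ × ℝ) → ℝ) :=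
  {F | ∃ g h p q : ℝ → ℝ,
    Continuous g ∧ Continuous h ∧ Continuous p ∧ Continuous q ∧
    (∃ C, ∀ x, |g x| ≤ C) ∧ (∃ C, ∀ x, |h x| ≤ C) ∧
    (∃ C, ∀ x, |p x| ≤ C) ∧ (∃ C, ∀ x, |q x| ≤ C) ∧
    F = fun w => g w.1.1 * h w.1.2 * (p w.2.1 * q w.2.2)}

lemma one_mem_D : (fun _ => (1:ℝ)) ∈ D := by
  refine ⟨fun _ => 1, fun _ => 1, fun _ => 1, fun _ => 1, continuous_const, continuous_const,
    continuous_const, continuous_const, ⟨1, fun _ => by norm_num⟩, ⟨1, fun _ => by norm_num⟩,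
    ⟨1, fun _ => by norm_num⟩, ⟨1, fun _ => by norm_num⟩, ?_⟩
  funext w; ring

lemma D_mul {F G : ((ℝ × ℝ) × ℝ × ℝ) → ℝ} (hF : F ∈ D) (hG : G ∈ D) : F * G ∈ D := by
  obtain ⟨g, h, p, q, hg, hh, hp, hq, ⟨Cg, hCg⟩, ⟨Ch, hCh⟩, ⟨Cp, hCp⟩, ⟨Cq, hCq⟩, rfl⟩ := hF
  obtain ⟨g', h', p', q', hg', hh', hp', hq', ⟨Cg', hCg'⟩, ⟨Ch', hCh'⟩, ⟨Cp', hCp'⟩,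
    ⟨Cq', hCq'⟩, rfl⟩ := hG
  have key : ∀ (a b : ℝ → ℝ) (Ca Cb : ℝ), (∀ x, |a x| ≤ Ca) → (∀ x, |b x| ≤ Cb) →
      ∀ x, |a x * b x| ≤ Ca * Cb := fun a b Ca Cb ha hb x => by
    rw [abs_mul]
    exact mul_le_mul (ha x) (hb x) (abs_nonneg _) ((abs_nonneg _).trans (ha x))
  refine ⟨fun x => g x * g' x, fun x => h x * h' x, fun x => p x * p' x, fun x => q x * q' x,
    hg.mul hg', hh.mul hh', hp.mul hp', hq.mul hq',
    ⟨Cg * Cg', key _ _ _ _ hCg hCg'⟩, ⟨Ch * Ch', key _ _ _ _ hCh hCh'⟩,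
    ⟨Cp * Cp', key _ _ _ _ hCp hCp'⟩, ⟨Cq * Cq', key _ _ _ _ hCq hCq'⟩, ?_⟩
  funext w; simp only [Pi.mul_apply]; ring

lemma span_mul {F G : ((ℝ × ℝ) × ℝ × ℝ) → ℝ} (hF : F ∈ Submodule.span ℝ D)
    (hG : G ∈ Submodule.span ℝ D) : F * G ∈ Submodule.span ℝ D := by
  have h1 : F * G ∈ Submodule.span ℝ D * Submodule.span ℝ D :=
    Submodule.mul_mem_mul hF hG
  rw [Submodule.span_mul_span] at h1
  refine Submodule.span_le.mpr ?_ h1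
  rintro x ⟨F', hF', G', hG', rfl⟩
  exact Submodule.subset_span (D_mul hF' hG')

lemma span_cont_bdd {F : ((ℝ × ℝ) × ℝ × ℝ) → ℝ} (hF : F ∈ Submodule.span ℝ D) :
    Continuous F ∧ ∃ C, ∀ w, |F w| ≤ C := by
  induction hF using Submodule.span_induction with
  | mem F hF =>
    obtain ⟨g, h, p, q, hg, hh, hp, hq, ⟨Cg, hCg⟩, ⟨Ch, hCh⟩, ⟨Cp, hCp⟩, ⟨Cq, hCq⟩, rfl⟩ := hF
    constructor
    · exact ((hg.comp (continuous_fst.comp continuous_fst)).mul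
        (hh.comp (continuous_snd.comp continuous_fst))).mul
        ((hp.comp (continuous_fst.comp continuous_snd)).mul
          (hq.comp (continuous_snd.comp continuous_snd)))
    · have h0g : 0 ≤ Cg := (abs_nonneg _).trans (hCg 0)
      have h0h : 0 ≤ Ch := (abs_nonneg _).trans (hCh 0)
      have h0p : 0 ≤ Cp := (abs_nonneg _).trans (hCp 0)
      have h0q : 0 ≤ Cq := (abs_nonneg _).trans (hCq 0)
      refine ⟨Cg * Ch * (Cp * Cq), fun w => ?_⟩
      rw [abs_mul, abs_mul, abs_mul]
      have e1 : |g w.1.1| * |h w.1.2| ≤ Cg * Ch :=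
        mul_le_mul (hCg _) (hCh _) (abs_nonneg _) h0g
      have e2 : |p w.2.1| * |q w.2.2| ≤ Cp * Cq :=
        mul_le_mul (hCp _) (hCq _) (abs_nonneg _) h0p
      exact mul_le_mul e1 e2 (mul_nonneg (abs_nonneg _) (abs_nonneg _)) (mul_nonneg h0g h0h)
  | zero => exact ⟨continuous_const, 0, fun w => by simp⟩
  | add F G _ _ hF hG =>
    refine ⟨hF.1.add hG.1, ?_⟩
    obtain ⟨C1, hC1⟩ := hF.2; obtain ⟨C2, hC2⟩ := hG.2
    exact ⟨C1 + C2, fun w => (abs_add_le _ _).trans (add_le_add (hC1 w) (hC2 w))⟩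
  | smul a F _ hF =>
    refine ⟨hF.1.const_smul a, ?_⟩
    obtain ⟨C1, hC1⟩ := hF.2
    refine ⟨|a| * C1, fun w => ?_⟩
    simp only [Pi.smul_apply, smul_eq_mul, abs_mul]
    exact mul_le_mul_of_nonneg_left (hC1 w) (abs_nonneg _)

/-- Splitting of fourfold product integrals. -/
lemma int4 (μ₁ μ₂ μ₃ μ₄ : Measure ℝ) [IsFiniteMeasure μ₁] [IsFiniteMeasure μ₂] [IsFiniteMeasure μ₃]
    [IsFiniteMeasure μ₄] (g h p q : ℝ → ℝ) :
    ∫ w : (ℝ × ℝ) × ℝ × ℝ, g w.1.1 * h w.1.2 * (p w.2.1 * q w.2.2)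
        ∂((μ₁.prod μ₂).prod (μ₃.prod μ₄))
      = (∫ x, g x ∂μ₁) * (∫ x, h x ∂μ₂) * ((∫ x, p x ∂μ₃) * (∫ x, q x ∂μ₄)) := by
  have h1 : ∫ w : (ℝ × ℝ) × ℝ × ℝ, g w.1.1 * h w.1.2 * (p w.2.1 * q w.2.2)
        ∂((μ₁.prod μ₂).prod (μ₃.prod μ₄))
      = ∫ w : (ℝ × ℝ) × ℝ × ℝ, (fun z : ℝ × ℝ => g z.1 * h z.2) w.1 *
          (fun x : ℝ × ℝ => p x.1 * q x.2) w.2 ∂((μ₁.prod μ₂).prod (μ₃.prod μ₄)) := rfl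
  rw [h1, integral_prod_mul (fun z : ℝ × ℝ => g z.1 * h z.2) (fun x : ℝ × ℝ => p x.1 * q x.2),
    integral_prod_mul g h, integral_prod_mul p q]

/-- Bounded continuous functions are integrable against finite measures. -/
lemma integ {F : ((ℝ × ℝ) × ℝ × ℝ) → ℝ} (hc : Continuous F) (hb : ∃ C, ∀ w, |F w| ≤ C)
    (μ : Measure ((ℝ × ℝ) × ℝ × ℝ)) [IsFiniteMeasure μ] : Integrable F μ := by
  obtain ⟨C, hC⟩ := hb
  exact (integrable_const C).mono' hc.aestronglyMeasurable
    (Eventually.of_forall fun w => by simpa [Real.norm_eq_abs] using hC w)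

lemma span_tendsto (B : ℕ → Measure ℝ) (Binf : Measure ℝ)
    [∀ n, IsProbabilityMeasure (B n)] [IsProbabilityMeasure Binf]
    (u v : ℕ → Measure ℝ) (uinf vinf : Measure ℝ)
    [∀ n, IsFiniteMeasure (u n)] [∀ n, IsFiniteMeasure (v n)]
    [IsFiniteMeasure uinf] [IsFiniteMeasure vinf]
    (hBweak : ∀ ψ : ℝ → ℝ, Continuous ψ →
      Tendsto (fun n => ∫ z, ψ z ∂(B n)) atTop (𝓝 (∫ z, ψ z ∂Binf)))
    (huweak : ∀ φ : ℝ → ℝ, Continuous φ → (∃ C, ∀ x, |φ x| ≤ C) →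
      Tendsto (fun n => ∫ x, φ x ∂(u n)) atTop (𝓝 (∫ x, φ x ∂uinf)))
    (hvweak : ∀ φ : ℝ → ℝ, Continuous φ → (∃ C, ∀ x, |φ x| ≤ C) →
      Tendsto (fun n => ∫ x, φ x ∂(v n)) atTop (𝓝 (∫ x, φ x ∂vinf)))
    {F : ((ℝ × ℝ) × ℝ × ℝ) → ℝ} (hF : F ∈ Submodule.span ℝ D) :
    Tendsto (fun n => ∫ w, F w ∂(((B n).prod (B n)).prod ((u n).prod (v n)))) atTop
      (𝓝 (∫ w, F w ∂((Binf.prod Binf).prod (uinf.prod vinf)))) := by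
  induction hF using Submodule.span_induction with
  | mem F hFD =>
    obtain ⟨g, h, p, q, hg, hh, hp, hq, hbg, hbh, hbp, hbq, rfl⟩ := hFD
    simp only [int4]
    exact ((hBweak g hg).mul (hBweak h hh)).mul ((huweak p hp hbp).mul (hvweak q hq hbq))
  | zero => simpa using tendsto_const_nhds
  | add F G hFm hGm hFt hGt =>
    have hF' := span_cont_bdd hFm; have hG' := span_cont_bdd hGm
    have e : ∀ (μ : Measure ((ℝ × ℝ) × ℝ × ℝ)), IsFiniteMeasure μ →
        ∫ w, (F + G) w ∂μ = (∫ w, F w ∂μ) + ∫ w, G w ∂μ := by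
      intro μ hμ
      simp only [Pi.add_apply]
      exact integral_add (integ hF'.1 hF'.2 μ) (integ hG'.1 hG'.2 μ)
    have e2 : (fun n => ∫ w, (F + G) w ∂(((B n).prod (B n)).prod ((u n).prod (v n))))
        = fun n => (∫ w, F w ∂(((B n).prod (B n)).prod ((u n).prod (v n))))
          + ∫ w, G w ∂(((B n).prod (B n)).prod ((u n).prod (v n))) :=
      funext fun n => e _ inferInstance
    rw [e2, e _ inferInstance]
    exact hFt.add hGt
  | smul a F hFm hFt =>
    have e : ∀ (μ : Measure ((ℝ × ℝ) × ℝ × ℝ)),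
        ∫ w, (a • F) w ∂μ = a * ∫ w, F w ∂μ := by
      intro μ
      simp only [Pi.smul_apply, smul_eq_mul]
      exact integral_const_mul a F
    simp only [e]
    exact hFt.const_mul a

lemma tail_small (μ : Measure ℝ) [IsFiniteMeasure μ] {ε : ℝ} (hε : 0 < ε) :
    ∃ m : ℕ, (μ (Set.Ioi (m : ℝ))).toReal < ε := by
  have h0 : Tendsto (fun m : ℕ => μ (Set.Ioi (m : ℝ))) atTop
      (𝓝 (μ (⋂ m : ℕ, Set.Ioi (m : ℝ)))) :=
    tendsto_measure_iInter_atTop (fun m => measurableSet_Ioi.nullMeasurableSet)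
      (fun i j hij => Set.Ioi_subset_Ioi (by exact_mod_cast hij)) ⟨0, measure_ne_top μ _⟩
  have hempty : (⋂ m : ℕ, Set.Ioi (m : ℝ)) = ∅ := by
    ext x
    simp only [Set.mem_iInter, Set.mem_Ioi, Set.mem_empty_iff_false, iff_false, not_forall, not_lt]
    obtain ⟨m, hm⟩ := exists_nat_gt x
    exact ⟨m, hm.le⟩
  rw [hempty, measure_empty] at h0
  have h1 : Tendsto (fun m : ℕ => (μ (Set.Ioi (m : ℝ))).toReal) atTop (𝓝 0) := by
    have h2 := (ENNReal.tendsto_toReal (by simp : (0:ENNReal) ≠ ⊤)).comp h0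
    exact h2
  exact (h1.eventually (gt_mem_nhds hε)).exists

lemma integral_le_measure_Ioi (μ : Measure ℝ) [IsFiniteMeasure μ] {ψ : ℝ → ℝ}
    (h0 : ∀ t, 0 ≤ ψ t) (h1 : ∀ t, ψ t ≤ 1) {a : ℝ} (hz : ∀ t ≤ a, ψ t = 0) :
    ∫ t, ψ t ∂μ ≤ (μ (Set.Ioi a)).toReal := by
  have step : ∫ t, ψ t ∂μ ≤ ∫ t, (Set.Ioi a).indicator (fun _ => (1:ℝ)) t ∂μ := by
    apply integral_mono_of_nonneg (Eventually.of_forall h0)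
      ((integrable_const (1:ℝ)).indicator measurableSet_Ioi) (Eventually.of_forall ?_)
    intro t
    by_cases ht : a < t
    · rw [Set.indicator_of_mem (Set.mem_Ioi.mpr ht)]; exact h1 t
    · rw [Set.indicator_of_notMem (by simpa using ht)]
      rw [hz t (not_lt.mp ht)]
  rw [integral_indicator_const _ measurableSet_Ioi] at step
  simpa [measureReal_def] using step

lemma measure_Ioi_le_integral (μ : Measure ℝ) [IsFiniteMeasure μ] {ψ : ℝ → ℝ}
    (hc : Continuous ψ) (h0 : ∀ t, 0 ≤ ψ t) (h1 : ∀ t, ψ t ≤ 1) {a : ℝ}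
    (hone : ∀ t, a ≤ t → ψ t = 1) :
    (μ (Set.Ioi a)).toReal ≤ ∫ t, ψ t ∂μ := by
  have hint : Integrable ψ μ :=
    (integrable_const (1:ℝ)).mono' hc.aestronglyMeasurable
      (Eventually.of_forall fun t => by
        rw [Real.norm_eq_abs, abs_of_nonneg (h0 t)]; exact h1 t)
  have step : ∫ t, (Set.Ioi a).indicator (fun _ => (1:ℝ)) t ∂μ ≤ ∫ t, ψ t ∂μ := by
    apply integral_mono_of_nonneg (Eventually.of_forall ?_) hint (Eventually.of_forall ?_)
    · intro t; exact Set.indicator_nonneg (fun _ _ => zero_le_one) t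
    · intro t
      by_cases ht : a < t
      · rw [Set.indicator_of_mem (Set.mem_Ioi.mpr ht), hone t ht.le]
      · rw [Set.indicator_of_notMem (by simpa using ht)]; exact h0 t
  rw [integral_indicator_const _ measurableSet_Ioi] at step
  simpa [measureReal_def] using step

lemma measure_Ioi_mono (μ : Measure ℝ) [IsFiniteMeasure μ] {a b : ℝ} (hab : a ≤ b) :
    (μ (Set.Ioi b)).toReal ≤ (μ (Set.Ioi a)).toReal :=
  ENNReal.toReal_mono (measure_ne_top _ _) (measure_mono (Set.Ioi_subset_Ioi hab))

lemma tight (u : ℕ → Measure ℝ) (uinf : Measure ℝ) [∀ n, IsFiniteMeasure (u n)]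
    [IsFiniteMeasure uinf]
    (huweak : ∀ φ : ℝ → ℝ, Continuous φ → (∃ C, ∀ x, |φ x| ≤ C) →
      Tendsto (fun n => ∫ x, φ x ∂(u n)) atTop (𝓝 (∫ x, φ x ∂uinf)))
    {ε : ℝ} (hε : 0 < ε) :
    ∃ R : ℝ, 0 < R ∧ (∀ n, ((u n) (Set.Ioi R)).toReal ≤ ε) ∧ (uinf (Set.Ioi R)).toReal ≤ ε := by
  obtain ⟨m₀, hm₀⟩ := tail_small uinf (half_pos hε)
  set ψ : ℝ → ℝ := fun t => max 0 (min 1 (t - m₀)) with hψdef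
  have hψc : Continuous ψ :=
    continuous_const.max (continuous_const.min (continuous_id.sub continuous_const))
  have hψ0 : ∀ t, 0 ≤ ψ t := fun t => le_max_left _ _
  have hψ1 : ∀ t, ψ t ≤ 1 := fun t => max_le zero_le_one (min_le_left _ _)
  have hψb : ∃ C, ∀ t, |ψ t| ≤ C :=
    ⟨1, fun t => by rw [abs_of_nonneg (hψ0 t)]; exact hψ1 t⟩
  have hψz : ∀ t ≤ (m₀ : ℝ), ψ t = 0 := fun t ht =>
    max_eq_left (min_le_of_right_le (by linarith))
  have hψo : ∀ t, (m₀ : ℝ) + 1 ≤ t → ψ t = 1 := by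
    intro t ht
    have h2 : min 1 (t - m₀) = 1 := min_eq_left (by linarith)
    rw [hψdef]; simp only [h2]; exact max_eq_right zero_le_one
  have hlim : ∫ t, ψ t ∂uinf < ε :=
    lt_of_le_of_lt (integral_le_measure_Ioi uinf hψ0 hψ1 hψz) (by linarith)
  have hev : ∀ᶠ n in atTop, ∫ t, ψ t ∂(u n) < ε :=
    (huweak ψ hψc hψb).eventually_lt_const hlim
  obtain ⟨N, hN⟩ := eventually_atTop.mp hev
  have hmf : ∀ n, ∃ m : ℕ, ((u n) (Set.Ioi (m : ℝ))).toReal < ε := fun n => tail_small (u n) hε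
  choose mf hmf' using hmf
  set M : ℕ := max (m₀ + 1) ((Finset.range N).sup mf) with hM
  refine ⟨(M : ℝ) + 1, by positivity, ?_, ?_⟩
  · intro n
    rcases le_or_gt N n with hn | hn
    · have h3 : ((u n) (Set.Ioi ((M : ℝ) + 1))).toReal ≤
          ((u n) (Set.Ioi ((m₀ : ℝ) + 1))).toReal := by
        apply measure_Ioi_mono
        have : (m₀ + 1 : ℕ) ≤ M := le_max_left _ _
        have := (Nat.cast_le (α := ℝ)).mpr this
        push_cast at this ⊢
        linarith
      exact h3.trans ((measure_Ioi_le_integral (u n) hψc hψ0 hψ1 hψo).trans (hN n hn).le)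
    · have h3 : ((u n) (Set.Ioi ((M : ℝ) + 1))).toReal ≤
          ((u n) (Set.Ioi ((mf n : ℝ)))).toReal := by
        apply measure_Ioi_mono
        have : mf n ≤ M := le_trans (Finset.le_sup (Finset.mem_range.mpr hn)) (le_max_right _ _)
        have := (Nat.cast_le (α := ℝ)).mpr this
        linarith
      exact h3.trans (hmf' n).le
  · have h3 : (uinf (Set.Ioi ((M : ℝ) + 1))).toReal ≤ (uinf (Set.Ioi (m₀ : ℝ))).toReal := by
      apply measure_Ioi_mono
      have : (m₀ + 1 : ℕ) ≤ M := le_max_left _ _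
      have := (Nat.cast_le (α := ℝ)).mpr this
      push_cast at this ⊢
      linarith
    linarith

/-- The compact box on which we apply Stone-Weierstrass. -/
def Kc (R : ℝ) : Set ((ℝ × ℝ) × ℝ × ℝ) :=
  (Set.Icc 0 1 ×ˢ Set.Icc 0 1) ×ˢ (Set.Icc 0 R ×ˢ Set.Icc 0 R)

lemma sw (R : ℝ) (f : ((ℝ × ℝ) × ℝ × ℝ) → ℝ) (hf : Continuous f) {ε : ℝ} (hε : 0 < ε) :
    ∃ F ∈ Submodule.span ℝ D, ∀ w ∈ Kc R, |F w - f w| ≤ ε := by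
  have hKcomp : IsCompact (Kc R) :=
    (isCompact_Icc.prod isCompact_Icc).prod (isCompact_Icc.prod isCompact_Icc)
  haveI : CompactSpace (Kc R) := isCompact_iff_compactSpace.mp hKcomp
  set A : Subalgebra ℝ C((Kc R), ℝ) := Algebra.adjoin ℝ
    {f : C((Kc R), ℝ) | ∃ F ∈ D, ∀ x : Kc R, f x = F (x : ((ℝ × ℝ) × ℝ × ℝ))} with hA
  -- separating functions
  have hsig : ∀ r s : ℝ, r ≠ s → ∃ σ : ℝ → ℝ, Continuous σ ∧ (∀ t, |σ t| ≤ 1) ∧ σ r ≠ σ s := by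
    intro r s hrs
    refine ⟨fun t => min |t - r| 1, (continuous_abs.comp (continuous_id.sub continuous_const)).min
      continuous_const, fun t => ?_, ?_⟩
    · rw [abs_of_nonneg (le_min (abs_nonneg _) zero_le_one)]
      exact min_le_right _ _
    · have h1 : min |r - r| 1 = 0 := by simp
      have h2 : 0 < min |s - r| 1 := lt_min (abs_pos.mpr (sub_ne_zero.mpr (Ne.symm hrs))) one_pos
      simp only [h1]
      exact fun h => absurd h.symm (ne_of_gt h2)
  -- D contains single-slot functions
  have hone : ∃ C, ∀ x : ℝ, |(1:ℝ)| ≤ C := ⟨1, fun _ => by norm_num⟩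
  have hmem1 : ∀ (σ : ℝ → ℝ), Continuous σ → (∀ t, |σ t| ≤ 1) →
      (fun w : (ℝ × ℝ) × ℝ × ℝ => σ w.1.1) ∈ D := by
    intro σ hc hb
    exact ⟨σ, fun _ => 1, fun _ => 1, fun _ => 1, hc, continuous_const, continuous_const,
      continuous_const, ⟨1, hb⟩, hone, hone, hone, by funext w; ring⟩
  have hmem2 : ∀ (σ : ℝ → ℝ), Continuous σ → (∀ t, |σ t| ≤ 1) →
      (fun w : (ℝ × ℝ) × ℝ × ℝ => σ w.1.2) ∈ D := by
    intro σ hc hb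
    exact ⟨fun _ => 1, σ, fun _ => 1, fun _ => 1, continuous_const, hc, continuous_const,
      continuous_const, hone, ⟨1, hb⟩, hone, hone, by funext w; ring⟩
  have hmem3 : ∀ (σ : ℝ → ℝ), Continuous σ → (∀ t, |σ t| ≤ 1) →
      (fun w : (ℝ × ℝ) × ℝ × ℝ => σ w.2.1) ∈ D := by
    intro σ hc hb
    exact ⟨fun _ => 1, fun _ => 1, σ, fun _ => 1, continuous_const, continuous_const, hc,
      continuous_const, hone, hone, ⟨1, hb⟩, hone, by funext w; ring⟩
  have hmem4 : ∀ (σ : ℝ → ℝ), Continuous σ → (∀ t, |σ t| ≤ 1) →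
      (fun w : (ℝ × ℝ) × ℝ × ℝ => σ w.2.2) ∈ D := by
    intro σ hc hb
    exact ⟨fun _ => 1, fun _ => 1, fun _ => 1, σ, continuous_const, continuous_const,
      continuous_const, hc, hone, hone, hone, ⟨1, hb⟩, by funext w; ring⟩
  have hsep : A.SeparatesPoints := by
    intro x y hxy
    have hne : (x : ((ℝ × ℝ) × ℝ × ℝ)) ≠ (y : ((ℝ × ℝ) × ℝ × ℝ)) :=
      fun h => hxy (Subtype.ext h)
    have hcases : (x : ((ℝ × ℝ) × ℝ × ℝ)).1.1 ≠ (y : ((ℝ × ℝ) × ℝ × ℝ)).1.1 ∨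
        (x : ((ℝ × ℝ) × ℝ × ℝ)).1.2 ≠ (y : ((ℝ × ℝ) × ℝ × ℝ)).1.2 ∨
        (x : ((ℝ × ℝ) × ℝ × ℝ)).2.1 ≠ (y : ((ℝ × ℝ) × ℝ × ℝ)).2.1 ∨
        (x : ((ℝ × ℝ) × ℝ × ℝ)).2.2 ≠ (y : ((ℝ × ℝ) × ℝ × ℝ)).2.2 := by
      by_contra hcon
      push_neg at hcon
      exact hne (Prod.ext (Prod.ext hcon.1 hcon.2.1) (Prod.ext hcon.2.2.1 hcon.2.2.2))
    have build : ∀ (G : ((ℝ × ℝ) × ℝ × ℝ) → ℝ), Continuous G → G ∈ D →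
        G (x : ((ℝ × ℝ) × ℝ × ℝ)) ≠ G (y : ((ℝ × ℝ) × ℝ × ℝ)) →
        ∃ g ∈ (fun f : C((Kc R), ℝ) => (f : (Kc R) → ℝ)) '' (A : Set C((Kc R), ℝ)),
          g x ≠ g y := by
      intro G hGc hGD hGxy
      refine ⟨⇑(⟨fun t : Kc R => G (t : ((ℝ × ℝ) × ℝ × ℝ)),
        hGc.comp continuous_subtype_val⟩ : C((Kc R), ℝ)), ?_, hGxy⟩
      exact ⟨_, Algebra.subset_adjoin ⟨G, hGD, fun t => rfl⟩, rfl⟩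
    rcases hcases with hc | hc | hc | hc
    · obtain ⟨σ, hσc, hσb, hσne⟩ := hsig _ _ hc
      exact build _ (hσc.comp (continuous_fst.comp continuous_fst)) (hmem1 σ hσc hσb) hσne
    · obtain ⟨σ, hσc, hσb, hσne⟩ := hsig _ _ hc
      exact build _ (hσc.comp (continuous_snd.comp continuous_fst)) (hmem2 σ hσc hσb) hσne
    · obtain ⟨σ, hσc, hσb, hσne⟩ := hsig _ _ hc
      exact build _ (hσc.comp (continuous_fst.comp continuous_snd)) (hmem3 σ hσc hσb) hσne
    · obtain ⟨σ, hσc, hσb, hσne⟩ := hsig _ _ hc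
      exact build _ (hσc.comp (continuous_snd.comp continuous_snd)) (hmem4 σ hσc hσb) hσne
  obtain ⟨g, hgapprox⟩ :=
    ContinuousMap.exists_mem_subalgebra_near_continuous_of_separatesPoints A hsep
      (fun x : Kc R => f (x : ((ℝ × ℝ) × ℝ × ℝ))) (hf.comp continuous_subtype_val) ε hε
  have main : ∀ (g' : C((Kc R), ℝ)), g' ∈ A →
      ∃ F ∈ Submodule.span ℝ D, ∀ x : Kc R, g' x = F (x : ((ℝ × ℝ) × ℝ × ℝ)) := by
    intro g' hg'
    induction hg' using Algebra.adjoin_induction with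
    | mem f hfD =>
      obtain ⟨F, hFD, hrestr⟩ := hfD
      exact ⟨F, Submodule.subset_span hFD, hrestr⟩
    | algebraMap r =>
      refine ⟨r • (fun _ => (1:ℝ)), Submodule.smul_mem _ r (Submodule.subset_span one_mem_D),
        fun t => ?_⟩
      simp [Pi.smul_apply, smul_eq_mul]
    | add p1 p2 hp1 hp2 ih1 ih2 =>
      obtain ⟨F1, hF1, hr1⟩ := ih1
      obtain ⟨F2, hF2, hr2⟩ := ih2
      exact ⟨F1 + F2, Submodule.add_mem _ hF1 hF2, fun t => by
        simp [ContinuousMap.add_apply, hr1 t, hr2 t]⟩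
    | mul p1 p2 hp1 hp2 ih1 ih2 =>
      obtain ⟨F1, hF1, hr1⟩ := ih1
      obtain ⟨F2, hF2, hr2⟩ := ih2
      exact ⟨F1 * F2, span_mul hF1 hF2, fun t => by
        simp [ContinuousMap.mul_apply, hr1 t, hr2 t]⟩
  obtain ⟨F, hFspan, hres⟩ := main (g : C((Kc R), ℝ)) g.2
  refine ⟨F, hFspan, fun w hw => ?_⟩
  have h5 := hgapprox ⟨w, hw⟩
  rw [hres ⟨w, hw⟩] at h5
  rw [Real.norm_eq_abs] at h5
  exact h5.le

end Stmt3Aux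

set_option maxHeartbeats 2000000 in
open Stmt3Aux in
/-- Continuity of `(B, u, v) ↦ T_B[u,v]` for the weak topologies: if `Bₙ → B∞` weakly
(probability measures on `[0,1]`), and `uₙ → u∞`, `vₙ → v∞` weakly (finite nonnegative
measures on `ℝ≥0`, tested against bounded continuous functions), then
`∫ φ dT_{Bₙ}[uₙ,vₙ] → ∫ φ dT_{B∞}[u∞,v∞]` for every continuous compactly supported `φ`. -/
theorem stmt3 (B : ℕ → Measure ℝ) (Binf : Measure ℝ)
    [∀ n, IsProbabilityMeasure (B n)] [IsProbabilityMeasure Binf]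
    (hB : ∀ n, (B n) (Set.Icc (0:ℝ) 1)ᶜ = 0) (hBinf : Binf (Set.Icc (0:ℝ) 1)ᶜ = 0)
    (hBweak : ∀ ψ : ℝ → ℝ, Continuous ψ →
      Tendsto (fun n => ∫ z, ψ z ∂(B n)) atTop (𝓝 (∫ z, ψ z ∂Binf)))
    (u v : ℕ → Measure ℝ) (uinf vinf : Measure ℝ)
    [∀ n, IsFiniteMeasure (u n)] [∀ n, IsFiniteMeasure (v n)]
    [IsFiniteMeasure uinf] [IsFiniteMeasure vinf]
    (hu : ∀ n, (u n) (Set.Iio (0:ℝ)) = 0) (hv : ∀ n, (v n) (Set.Iio (0:ℝ)) = 0)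
    (huinf : uinf (Set.Iio (0:ℝ)) = 0) (hvinf : vinf (Set.Iio (0:ℝ)) = 0)
    (huweak : ∀ φ : ℝ → ℝ, Continuous φ → (∃ C, ∀ x, |φ x| ≤ C) →
      Tendsto (fun n => ∫ x, φ x ∂(u n)) atTop (𝓝 (∫ x, φ x ∂uinf)))
    (hvweak : ∀ φ : ℝ → ℝ, Continuous φ → (∃ C, ∀ x, |φ x| ≤ C) →
      Tendsto (fun n => ∫ x, φ x ∂(v n)) atTop (𝓝 (∫ x, φ x ∂vinf)))
    (φ : ℝ → ℝ) (hφc : Continuous φ) (hφs : HasCompactSupport φ) :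
    Tendsto (fun n => ∫ x, φ x ∂(transferT (B n) (u n) (v n))) atTop
      (𝓝 (∫ x, φ x ∂(transferT Binf uinf vinf))) := by
  classical
  have hTc : Continuous fun w : (ℝ × ℝ) × ℝ × ℝ => w.2.1 * (1 - w.1.1) + w.2.2 * w.1.2 :=
    ((continuous_fst.comp continuous_snd).mul
      (continuous_const.sub (continuous_fst.comp continuous_fst))).add
      ((continuous_snd.comp continuous_snd).mul (continuous_snd.comp continuous_fst))
  set f : ((ℝ × ℝ) × ℝ × ℝ) → ℝ :=
    fun w => φ (w.2.1 * (1 - w.1.1) + w.2.2 * w.1.2) with hfdef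
  have hfc : Continuous f := hφc.comp hTc
  obtain ⟨C, hC⟩ : ∃ C, ∀ x, |φ x| ≤ C := by
    obtain ⟨C, hC⟩ := hφs.exists_bound_of_continuous hφc
    exact ⟨C, fun x => by simpa [Real.norm_eq_abs] using hC x⟩
  have hC0 : 0 ≤ C := (abs_nonneg _).trans (hC 0)
  have hfb : ∀ w, |f w| ≤ C := fun w => hC _
  -- rewrite the transfer integrals as integrals over the fourfold product
  have key : ∀ (B' u' v' : Measure ℝ), IsProbabilityMeasure B' → IsFiniteMeasure u' →
      IsFiniteMeasure v' →
      ∫ x, φ x ∂(transferT B' u' v') = ∫ w, f w ∂((B'.prod B').prod (u'.prod v')) := by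
    intro B' u' v' h1 h2 h3
    rw [transferT]
    exact integral_map hTc.measurable.aemeasurable hφc.aestronglyMeasurable
  have goalrw : (fun n => ∫ x, φ x ∂(transferT (B n) (u n) (v n)))
      = fun n => ∫ w, f w ∂(((B n).prod (B n)).prod ((u n).prod (v n))) :=
    funext fun n => key _ _ _ inferInstance inferInstance inferInstance
  rw [goalrw, key Binf uinf vinf inferInstance inferInstance inferInstance]
  -- mass bounds
  have hmass : ∀ (μ : Measure ℝ), ∫ x, (1:ℝ) ∂μ = (μ Set.univ).toReal := by
    intro μ; simp [integral_const, measureReal_def]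
  have hu1 := huweak (fun _ => 1) continuous_const ⟨1, fun _ => by norm_num⟩
  have hv1 := hvweak (fun _ => 1) continuous_const ⟨1, fun _ => by norm_num⟩
  simp only [hmass] at hu1 hv1
  obtain ⟨Au, hAu'⟩ := hu1.bddAbove_range
  obtain ⟨Av, hAv'⟩ := hv1.bddAbove_range
  set A : ℝ := max 1 (max (max Au Av) (max ((uinf Set.univ).toReal) ((vinf Set.univ).toReal)))
    with hAdef
  have hA1 : (1:ℝ) ≤ A := le_max_left _ _
  have hA0 : (0:ℝ) < A := lt_of_lt_of_le one_pos hA1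
  have hAu : ∀ n, ((u n) Set.univ).toReal ≤ A := fun n =>
    le_trans (hAu' ⟨n, rfl⟩) (le_trans (le_max_left _ _) (le_trans (le_max_left _ _)
      (le_max_right _ _)))
  have hAv : ∀ n, ((v n) Set.univ).toReal ≤ A := fun n =>
    le_trans (hAv' ⟨n, rfl⟩) (le_trans (le_max_right _ _) (le_trans (le_max_left _ _)
      (le_max_right _ _)))
  have hAuinf : (uinf Set.univ).toReal ≤ A :=
    le_trans (le_max_left _ _) (le_trans (le_max_right _ _) (le_max_right _ _))
  have hAvinf : (vinf Set.univ).toReal ≤ A :=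
    le_trans (le_max_right _ _) (le_trans (le_max_right _ _) (le_max_right _ _))
  -- start the epsilon argument
  rw [Metric.tendsto_nhds]
  intro ε hε
  have hd : (0:ℝ) < 4*C*A + 2*A*A + 2 := by nlinarith
  set δ : ℝ := ε / (4*C*A + 2*A*A + 2) with hδdef
  have hδ : 0 < δ := div_pos hε hd
  obtain ⟨Ru, hRu0, hRuB, hRuinf⟩ := tight u uinf huweak hδ
  obtain ⟨Rv, hRv0, hRvB, hRvinf⟩ := tight v vinf hvweak hδ
  set R₀ : ℝ := max Ru Rv with hR₀def
  have htailu : ∀ n, ((u n) (Set.Ioi R₀)).toReal ≤ δ := fun n =>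
    (measure_Ioi_mono (u n) (le_max_left _ _)).trans (hRuB n)
  have htailv : ∀ n, ((v n) (Set.Ioi R₀)).toReal ≤ δ := fun n =>
    (measure_Ioi_mono (v n) (le_max_right _ _)).trans (hRvB n)
  have htailuinf : (uinf (Set.Ioi R₀)).toReal ≤ δ :=
    (measure_Ioi_mono uinf (le_max_left _ _)).trans hRuinf
  have htailvinf : (vinf (Set.Ioi R₀)).toReal ≤ δ :=
    (measure_Ioi_mono vinf (le_max_right _ _)).trans hRvinf
  -- the cutoff
  set χ : ℝ → ℝ := fun t => max 0 (min 1 (R₀ + 1 - t)) with hχdef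
  have hχc : Continuous χ :=
    continuous_const.max (continuous_const.min (continuous_const.sub continuous_id))
  have hχ0 : ∀ t, 0 ≤ χ t := fun t => le_max_left _ _
  have hχ1 : ∀ t, χ t ≤ 1 := fun t => max_le zero_le_one (min_le_left _ _)
  have hχone : ∀ t ≤ R₀, χ t = 1 := by
    intro t ht
    have h2 : min 1 (R₀ + 1 - t) = 1 := min_eq_left (by linarith)
    rw [hχdef]; simp only [h2]; exact max_eq_right zero_le_one
  have hχzero : ∀ t, R₀ + 1 ≤ t → χ t = 0 := fun t ht =>
    max_eq_left (min_le_of_right_le (by linarith))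
  -- Stone-Weierstrass approximation on the box
  obtain ⟨F, hFspan, hFappr⟩ := sw (R₀ + 1) f hfc hδ
  have hcD : (fun w : (ℝ × ℝ) × ℝ × ℝ => χ w.2.1 * χ w.2.2) ∈ D := by
    refine ⟨fun _ => 1, fun _ => 1, χ, χ, continuous_const, continuous_const, hχc, hχc,
      ⟨1, fun _ => by norm_num⟩, ⟨1, fun _ => by norm_num⟩,
      ⟨1, fun t => by rw [abs_of_nonneg (hχ0 t)]; exact hχ1 t⟩,
      ⟨1, fun t => by rw [abs_of_nonneg (hχ0 t)]; exact hχ1 t⟩, ?_⟩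
    funext w; ring
  set Fc : ((ℝ × ℝ) × ℝ × ℝ) → ℝ := F * (fun w => χ w.2.1 * χ w.2.2) with hFcdef
  have hFcspan : Fc ∈ Submodule.span ℝ D :=
    span_mul hFspan (Submodule.subset_span hcD)
  -- pointwise estimate on the good region
  have hptw : ∀ w : (ℝ × ℝ) × ℝ × ℝ, w.1.1 ∈ Set.Icc (0:ℝ) 1 → w.1.2 ∈ Set.Icc (0:ℝ) 1 →
      0 ≤ w.2.1 → 0 ≤ w.2.2 →
      |f w - Fc w| ≤ C * (1 - χ w.2.1) + (C * (1 - χ w.2.2) + δ) := by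
    intro w hz1 hz2 hx1 hx2
    have ha0 : 0 ≤ χ w.2.1 := hχ0 _
    have ha1 : χ w.2.1 ≤ 1 := hχ1 _
    have hb0 : 0 ≤ χ w.2.2 := hχ0 _
    have hb1 : χ w.2.2 ≤ 1 := hχ1 _
    have hab0 : 0 ≤ χ w.2.1 * χ w.2.2 := mul_nonneg ha0 hb0
    have hab1 : χ w.2.1 * χ w.2.2 ≤ 1 := mul_le_one₀ ha1 hb0 hb1
    have e : f w - Fc w = f w * (1 - χ w.2.1 * χ w.2.2)
        + (f w - F w) * (χ w.2.1 * χ w.2.2) := by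
      simp only [hFcdef, Pi.mul_apply]; ring
    have t1 : |f w * (1 - χ w.2.1 * χ w.2.2)| ≤ C * ((1 - χ w.2.1) + (1 - χ w.2.2)) := by
      rw [abs_mul, abs_of_nonneg (by linarith : (0:ℝ) ≤ 1 - χ w.2.1 * χ w.2.2)]
      have h6 : 1 - χ w.2.1 * χ w.2.2 ≤ (1 - χ w.2.1) + (1 - χ w.2.2) := by nlinarith
      exact mul_le_mul (hfb w) h6 (by linarith) hC0
    have t2 : |(f w - F w) * (χ w.2.1 * χ w.2.2)| ≤ δ := by
      by_cases h1 : w.2.1 ≤ R₀ + 1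
      · by_cases h2 : w.2.2 ≤ R₀ + 1
        · have hwK : w ∈ Kc (R₀ + 1) :=
            ⟨⟨hz1, hz2⟩, ⟨⟨hx1, h1⟩, ⟨hx2, h2⟩⟩⟩
          have h7 := hFappr w hwK
          rw [abs_mul]
          calc |f w - F w| * |χ w.2.1 * χ w.2.2| ≤ δ * 1 :=
                mul_le_mul (by rwa [abs_sub_comm]) (by rwa [abs_of_nonneg hab0])
                  (abs_nonneg _) hδ.le
            _ = δ := mul_one δ
        · have h8 : χ w.2.2 = 0 := hχzero _ (not_le.mp h2).le
          rw [h8]; simp [hδ.le]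
      · have h8 : χ w.2.1 = 0 := hχzero _ (not_le.mp h1).le
        rw [h8]; simp [hδ.le]
    calc |f w - Fc w| ≤ |f w * (1 - χ w.2.1 * χ w.2.2)|
          + |(f w - F w) * (χ w.2.1 * χ w.2.2)| := by rw [e]; exact abs_add_le _ _
      _ ≤ C * ((1 - χ w.2.1) + (1 - χ w.2.2)) + δ := add_le_add t1 t2
      _ = C * (1 - χ w.2.1) + (C * (1 - χ w.2.2) + δ) := by ring
  -- per-measure estimate
  have est : ∀ (B' u' v' : Measure ℝ), IsProbabilityMeasure B' → IsFiniteMeasure u' →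
      IsFiniteMeasure v' →
      B' (Set.Icc (0:ℝ) 1)ᶜ = 0 → u' (Set.Iio (0:ℝ)) = 0 → v' (Set.Iio (0:ℝ)) = 0 →
      (u' Set.univ).toReal ≤ A → (v' Set.univ).toReal ≤ A →
      (u' (Set.Ioi R₀)).toReal ≤ δ → (v' (Set.Ioi R₀)).toReal ≤ δ →
      |∫ w, f w ∂((B'.prod B').prod (u'.prod v'))
        - ∫ w, Fc w ∂((B'.prod B').prod (u'.prod v'))| ≤ 2*(C*(A*δ)) + δ*(A*A) := by
    intro B' u' v' hB'1 hu'1 hv'1 hB'null hu'null hv'null hu'A hv'A hu'tail hv'tail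
    haveI := hB'1; haveI := hu'1; haveI := hv'1
    set μ' := (B'.prod B').prod (u'.prod v') with hμ'def
    -- a.e. the coordinates are in the good region
    have hae : ∀ᵐ w ∂μ', w.1.1 ∈ Set.Icc (0:ℝ) 1 ∧ w.1.2 ∈ Set.Icc (0:ℝ) 1 ∧
        0 ≤ w.2.1 ∧ 0 ≤ w.2.2 := by
      rw [ae_iff]
      have h1 : μ' (((Set.Icc (0:ℝ) 1)ᶜ ×ˢ (Set.univ : Set ℝ)) ×ˢ
          (Set.univ : Set (ℝ × ℝ))) = 0 := by
        rw [hμ'def, Measure.prod_prod, Measure.prod_prod, hB'null]; simp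
      have h2 : μ' (((Set.univ : Set ℝ) ×ˢ (Set.Icc (0:ℝ) 1)ᶜ) ×ˢ
          (Set.univ : Set (ℝ × ℝ))) = 0 := by
        rw [hμ'def, Measure.prod_prod, Measure.prod_prod, hB'null]; simp
      have h3 : μ' ((Set.univ : Set (ℝ × ℝ)) ×ˢ
          ((Set.Iio (0:ℝ)) ×ˢ (Set.univ : Set ℝ))) = 0 := by
        rw [hμ'def, Measure.prod_prod, Measure.prod_prod, hu'null]; simp
      have h4 : μ' ((Set.univ : Set (ℝ × ℝ)) ×ˢ
          ((Set.univ : Set ℝ) ×ˢ (Set.Iio (0:ℝ)))) = 0 := by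
        rw [hμ'def, Measure.prod_prod, Measure.prod_prod, hv'null]; simp
      refine measure_mono_null ?_
        (measure_union_null (measure_union_null (measure_union_null h1 h2) h3) h4)
      intro w hw
      simp only [Set.mem_setOf_eq, not_and_or] at hw
      rcases hw with h | h | h | h
      · exact Or.inl (Or.inl (Or.inl ⟨⟨h, Set.mem_univ _⟩, Set.mem_univ _⟩))
      · exact Or.inl (Or.inl (Or.inr ⟨⟨Set.mem_univ _, h⟩, Set.mem_univ _⟩))
      · exact Or.inl (Or.inr ⟨Set.mem_univ _, ⟨Set.mem_Iio.mpr (not_le.mp h), Set.mem_univ _⟩⟩)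
      · exact Or.inr ⟨Set.mem_univ _, ⟨Set.mem_univ _, Set.mem_Iio.mpr (not_le.mp h)⟩⟩
    have hFc' := span_cont_bdd hFcspan
    have hif : Integrable f μ' := integ hfc ⟨C, hfb⟩ μ'
    have hiFc : Integrable Fc μ' := integ hFc'.1 hFc'.2 μ'
    have hig1 : Integrable (fun w : (ℝ × ℝ) × ℝ × ℝ => C * (1 - χ w.2.1)) μ' := by
      apply integ (continuous_const.mul (continuous_const.sub
        (hχc.comp (continuous_fst.comp continuous_snd))))
      refine ⟨C, fun w => ?_⟩
      show |C * (1 - χ w.2.1)| ≤ C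
      have h0' : (0:ℝ) ≤ 1 - χ w.2.1 := by linarith [hχ1 w.2.1]
      rw [abs_of_nonneg (mul_nonneg hC0 h0')]
      nlinarith [hχ0 w.2.1]
    have hig2 : Integrable (fun w : (ℝ × ℝ) × ℝ × ℝ => C * (1 - χ w.2.2)) μ' := by
      apply integ (continuous_const.mul (continuous_const.sub
        (hχc.comp (continuous_snd.comp continuous_snd))))
      refine ⟨C, fun w => ?_⟩
      show |C * (1 - χ w.2.2)| ≤ C
      have h0' : (0:ℝ) ≤ 1 - χ w.2.2 := by linarith [hχ1 w.2.2]
      rw [abs_of_nonneg (mul_nonneg hC0 h0')]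
      nlinarith [hχ0 w.2.2]
    have step1 : |∫ w, f w ∂μ' - ∫ w, Fc w ∂μ'|
        ≤ ∫ w, (C * (1 - χ w.2.1) + (C * (1 - χ w.2.2) + δ)) ∂μ' := by
      rw [← integral_sub hif hiFc]
      have h13 := norm_integral_le_integral_norm (μ := μ') (fun w => f w - Fc w)
      simp only [Real.norm_eq_abs] at h13
      refine h13.trans ?_
      have h14 : Integrable (fun w : (ℝ × ℝ) × ℝ × ℝ =>
          C * (1 - χ w.2.1) + (C * (1 - χ w.2.2) + δ)) μ' :=
        hig1.add (hig2.add (integrable_const δ))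
      apply integral_mono_of_nonneg (Eventually.of_forall fun w => abs_nonneg _) h14
      filter_upwards [hae] with w hw
      exact hptw w hw.1 hw.2.1 hw.2.2.1 hw.2.2.2
    have step2 : ∫ w, (C * (1 - χ w.2.1) + (C * (1 - χ w.2.2) + δ)) ∂μ'
        = C * ∫ w, (1 - χ w.2.1) ∂μ' + (C * ∫ w, (1 - χ w.2.2) ∂μ'
          + δ * (μ' Set.univ).toReal) := by
      have i23 : Integrable (fun w : (ℝ × ℝ) × ℝ × ℝ => C * (1 - χ w.2.2) + δ) μ' :=
        hig2.add (integrable_const δ)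
      rw [integral_add hig1 i23, integral_add hig2 (integrable_const δ), integral_const_mul,
        integral_const_mul, integral_const, smul_eq_mul, measureReal_def]
      ring
    -- compute the three pieces via int4
    have hone : ∫ x, (1:ℝ) ∂B' = 1 := by simp
    have e1 : ∫ w, (1 - χ w.2.1) ∂μ' = (∫ x, (1 - χ x) ∂u') * (v' Set.univ).toReal := by
      have h9 : (fun w : (ℝ × ℝ) × ℝ × ℝ => (1:ℝ) * 1 * ((1 - χ w.2.1) * 1))
          = fun w : (ℝ × ℝ) × ℝ × ℝ => 1 - χ w.2.1 := by funext w; ring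
      rw [hμ'def, ← h9, int4 B' B' u' v' (fun _ => 1) (fun _ => 1) (fun x => 1 - χ x)
        (fun _ => 1)]
      simp [integral_const, measureReal_def]
    have e2 : ∫ w, (1 - χ w.2.2) ∂μ' = (u' Set.univ).toReal * ∫ x, (1 - χ x) ∂v' := by
      have h9 : (fun w : (ℝ × ℝ) × ℝ × ℝ => (1:ℝ) * 1 * ((1:ℝ) * (1 - χ w.2.2)))
          = fun w : (ℝ × ℝ) × ℝ × ℝ => 1 - χ w.2.2 := by funext w; ring
      rw [hμ'def, ← h9, int4 B' B' u' v' (fun _ => 1) (fun _ => 1) (fun _ => 1)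
        (fun x => 1 - χ x)]
      simp [integral_const, measureReal_def]
    have e3 : (μ' Set.univ).toReal = (u' Set.univ).toReal * (v' Set.univ).toReal := by
      have m1 : (u'.prod v') Set.univ = u' Set.univ * v' Set.univ := by
        rw [← Set.univ_prod_univ, Measure.prod_prod]
      have m2 : μ' Set.univ = (u'.prod v') Set.univ := by
        rw [hμ'def, ← Set.univ_prod_univ, Measure.prod_prod, measure_univ, one_mul]
      rw [m2, m1, ENNReal.toReal_mul]
    -- bounds on the one-dimensional integrals
    have hIu : ∫ x, (1 - χ x) ∂u' ≤ δ := by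
      refine le_trans (integral_le_measure_Ioi (ψ := fun x => 1 - χ x) (a := R₀) u'
        (fun t => by show (0:ℝ) ≤ 1 - χ t; linarith [hχ1 t])
        (fun t => by show 1 - χ t ≤ 1; linarith [hχ0 t])
        (fun t ht => by show 1 - χ t = 0; rw [hχone t ht]; ring)) hu'tail
    have hIv : ∫ x, (1 - χ x) ∂v' ≤ δ := by
      refine le_trans (integral_le_measure_Ioi (ψ := fun x => 1 - χ x) (a := R₀) v'
        (fun t => by show (0:ℝ) ≤ 1 - χ t; linarith [hχ1 t])
        (fun t => by show 1 - χ t ≤ 1; linarith [hχ0 t])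
        (fun t ht => by show 1 - χ t = 0; rw [hχone t ht]; ring)) hv'tail
    have hIu0 : 0 ≤ ∫ x, (1 - χ x) ∂u' :=
      integral_nonneg fun t => by simpa using sub_nonneg.mpr (hχ1 t)
    have hIv0 : 0 ≤ ∫ x, (1 - χ x) ∂v' :=
      integral_nonneg fun t => by simpa using sub_nonneg.mpr (hχ1 t)
    have hmu0 : (0:ℝ) ≤ (u' Set.univ).toReal := ENNReal.toReal_nonneg
    have hmv0 : (0:ℝ) ≤ (v' Set.univ).toReal := ENNReal.toReal_nonneg
    have b1 : ∫ w, (1 - χ w.2.1) ∂μ' ≤ δ * A := by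
      rw [e1]; exact mul_le_mul hIu hv'A hmv0 hδ.le
    have b2 : ∫ w, (1 - χ w.2.2) ∂μ' ≤ A * δ := by
      rw [e2]; exact mul_le_mul hu'A hIv hIv0 hA0.le
    have b3 : (μ' Set.univ).toReal ≤ A * A := by
      rw [e3]; exact mul_le_mul hu'A hv'A hmv0 hA0.le
    have b1' : 0 ≤ ∫ w, (1 - χ w.2.1) ∂μ' := by rw [e1]; exact mul_nonneg hIu0 hmv0
    have b2' : 0 ≤ ∫ w, (1 - χ w.2.2) ∂μ' := by rw [e2]; exact mul_nonneg hmu0 hIv0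
    have bm' : (0:ℝ) ≤ (μ' Set.univ).toReal := ENNReal.toReal_nonneg
    refine step1.trans ?_
    rw [step2]
    have c1 : C * ∫ w, (1 - χ w.2.1) ∂μ' ≤ C * (δ * A) := mul_le_mul_of_nonneg_left b1 hC0
    have c2 : C * ∫ w, (1 - χ w.2.2) ∂μ' ≤ C * (A * δ) := mul_le_mul_of_nonneg_left b2 hC0
    have c3 : δ * (μ' Set.univ).toReal ≤ δ * (A * A) := mul_le_mul_of_nonneg_left b3 hδ.le
    nlinarith
  -- convergence for the approximant
  have hJ := span_tendsto B Binf u v uinf vinf hBweak huweak hvweak hFcspan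
  have hJev : ∀ᶠ n in atTop,
      |(∫ w, Fc w ∂(((B n).prod (B n)).prod ((u n).prod (v n))))
        - ∫ w, Fc w ∂((Binf.prod Binf).prod (uinf.prod vinf))| < δ := by
    have h11 := Metric.tendsto_nhds.mp hJ δ hδ
    simpa [Real.dist_eq] using h11
  have hestn : ∀ n, |(∫ w, f w ∂(((B n).prod (B n)).prod ((u n).prod (v n))))
      - ∫ w, Fc w ∂(((B n).prod (B n)).prod ((u n).prod (v n)))| ≤ 2*(C*(A*δ)) + δ*(A*A) :=
    fun n => est (B n) (u n) (v n) inferInstance inferInstance inferInstance (hB n) (hu n)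
      (hv n) (hAu n) (hAv n) (htailu n) (htailv n)
  have hestinf : |(∫ w, f w ∂((Binf.prod Binf).prod (uinf.prod vinf)))
      - ∫ w, Fc w ∂((Binf.prod Binf).prod (uinf.prod vinf))| ≤ 2*(C*(A*δ)) + δ*(A*A) :=
    est Binf uinf vinf inferInstance inferInstance inferInstance hBinf huinf hvinf
      hAuinf hAvinf htailuinf htailvinf
  filter_upwards [hJev] with n hn
  rw [Real.dist_eq]
  have tri : |(∫ w, f w ∂(((B n).prod (B n)).prod ((u n).prod (v n))))
      - ∫ w, f w ∂((Binf.prod Binf).prod (uinf.prod vinf))|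
      ≤ |(∫ w, f w ∂(((B n).prod (B n)).prod ((u n).prod (v n))))
          - ∫ w, Fc w ∂(((B n).prod (B n)).prod ((u n).prod (v n)))|
        + |(∫ w, Fc w ∂(((B n).prod (B n)).prod ((u n).prod (v n))))
          - ∫ w, Fc w ∂((Binf.prod Binf).prod (uinf.prod vinf))|
        + |(∫ w, Fc w ∂((Binf.prod Binf).prod (uinf.prod vinf)))
          - ∫ w, f w ∂((Binf.prod Binf).prod (uinf.prod vinf))| := by
    have := abs_sub_le (∫ w, f w ∂(((B n).prod (B n)).prod ((u n).prod (v n))))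
      (∫ w, Fc w ∂(((B n).prod (B n)).prod ((u n).prod (v n))))
      (∫ w, f w ∂((Binf.prod Binf).prod (uinf.prod vinf)))
    have h12 := abs_sub_le (∫ w, Fc w ∂(((B n).prod (B n)).prod ((u n).prod (v n))))
      (∫ w, Fc w ∂((Binf.prod Binf).prod (uinf.prod vinf)))
      (∫ w, f w ∂((Binf.prod Binf).prod (uinf.prod vinf)))
    linarith
  have hestinf' : |(∫ w, Fc w ∂((Binf.prod Binf).prod (uinf.prod vinf)))
      - ∫ w, f w ∂((Binf.prod Binf).prod (uinf.prod vinf))| ≤ 2*(C*(A*δ)) + δ*(A*A) := by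
    rw [abs_sub_comm]; exact hestinf
  have hfin : δ * (4*C*A + 2*A*A + 2) = ε := by
    rw [hδdef]; field_simp
  nlinarith [hestn n]
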